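/- Let M > 0, l > 0, let r₀ > 0 be the unique positive root of F(r) = 1 - 2M/r + r²/l², and let a ∈ ℝ with -9/8 < a ≤ 0. Suppose ψ : [r₀, ∞) → ℝ is continuously differentiable, r^{3/2} ψ(r) → 0 as r → ∞, ∫_{r₀}^∞ r⁴ ψ'(r)² dr < ∞, and ∫_{r₀}^∞ r² ( F(r) ψ'(r)² + (2a/l²) ψ(r)² ) dr ≤ 0. Then ψ ≡ 0 on [r₀, ∞). -/

import Mathlib

open Set Filter MeasureTheory

lemma hardy_aux (r₀ : ℝ) (hr₀ : 0 < r₀) (ψ ψ' : ℝ → ℝ)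
    (hderiv : ∀ r ∈ Set.Ici r₀, HasDerivAt ψ (ψ' r) r)
    (hcont : ContinuousOn ψ' (Set.Ici r₀))
    (hdecay : Tendsto (fun r : ℝ => r ^ ((3:ℝ)/2) * ψ r) atTop (nhds 0))
    (hB : IntegrableOn (fun r => (r^3 - r₀^3)^2 / r^2 * (ψ' r)^2) (Set.Ici r₀)) :
    IntegrableOn (fun r => r^2 * (ψ r)^2) (Set.Ici r₀) ∧
    ∫ r in Set.Ici r₀, r^2 * (ψ r)^2 ≤
      (4/9) * ∫ r in Set.Ici r₀, (r^3 - r₀^3)^2 / r^2 * (ψ' r)^2 := by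
  set h : ℝ → ℝ := fun r => (r^3 - r₀^3)^2 / r^2 * (ψ' r)^2 with hh
  set f : ℝ → ℝ := fun r => r^2 * (ψ r)^2 with hf
  have hψc : ContinuousOn ψ (Set.Ici r₀) := fun x hx =>
    (hderiv x hx).continuousAt.continuousWithinAt
  have hfc : ContinuousOn f (Set.Ici r₀) :=
    (continuousOn_pow 2).mul (hψc.pow 2)
  have hhc : ContinuousOn h (Set.Ici r₀) := by
    apply ContinuousOn.mul _ (hcont.pow 2)
    apply ContinuousOn.div
    · exact (((continuousOn_pow 3).sub continuousOn_const).pow 2)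
    · exact continuousOn_pow 2
    · intro x hx
      have : (0:ℝ) < x := lt_of_lt_of_le hr₀ hx
      positivity
  have hB' : IntegrableOn h (Set.Ioi r₀) := hB.mono_set Ioi_subset_Ici_self
  set B : ℝ := ∫ r in Set.Ioi r₀, h r with hBdef
  -- the primitive
  set P : ℝ → ℝ := fun r => (r^3 - r₀^3)/3 * (ψ r)^2 with hP
  set P' : ℝ → ℝ := fun r => r^2 * (ψ r)^2 + (2/3)*(r^3 - r₀^3) * (ψ r * ψ' r) with hP'
  have hPd : ∀ x ∈ Set.Ici r₀, HasDerivAt P (P' x) x := by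
    intro x hx
    have h1 : HasDerivAt (fun r : ℝ => (r^3 - r₀^3)/3) (x^2) x := by
      have := ((hasDerivAt_pow 3 x).sub_const (r₀^3)).div_const 3
      exact this.congr_deriv (by push_cast; ring)
    have h2 : HasDerivAt (fun r => (ψ r)^2) (2 * ψ x * ψ' x) x := by
      have := (hderiv x hx).pow 2
      exact this.congr_deriv (by push_cast; ring)
    have := h1.mul h2
    exact this.congr_deriv (by simp only [hP']; ring)
  have hP'c : ContinuousOn P' (Set.Ici r₀) := by
    apply hfc.add
    exact (continuousOn_const.mul (((continuousOn_pow 3).sub continuousOn_const))).mul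
      (hψc.mul hcont)
  -- key finite interval estimate
  have KEY : ∀ R, r₀ ≤ R → ∫ r in r₀..R, f r ≤ (2/3) * (R^3 * (ψ R)^2) + (4/9) * B := by
    intro R hR
    have hIcc : Set.Icc r₀ R ⊆ Set.Ici r₀ := Icc_subset_Ici_self
    have huIcc : Set.uIcc r₀ R = Set.Icc r₀ R := uIcc_of_le hR
    have hP'i : IntervalIntegrable P' volume r₀ R := by
      apply ContinuousOn.intervalIntegrable
      rw [huIcc]; exact hP'c.mono hIcc
    have hfi : IntervalIntegrable f volume r₀ R := by
      apply ContinuousOn.intervalIntegrable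
      rw [huIcc]; exact hfc.mono hIcc
    have hhi : IntervalIntegrable h volume r₀ R := by
      apply ContinuousOn.intervalIntegrable
      rw [huIcc]; exact hhc.mono hIcc
    have hFTC : ∫ r in r₀..R, P' r = P R - P r₀ := by
      apply intervalIntegral.integral_eq_sub_of_hasDerivAt
      · intro x hx
        rw [huIcc] at hx
        exact hPd x (hIcc hx)
      · exact hP'i
    have hptwise : ∀ r ∈ Set.Icc r₀ R, (1/2) * f r ≤ P' r + (2/9) * h r := by
      intro r hr
      have hr0 : (0:ℝ) < r := lt_of_lt_of_le hr₀ hr.1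
      rw [← sub_nonneg]
      have hid : P' r + (2/9) * h r - (1/2) * f r
          = (3*r^2*ψ r + 2*(r^3 - r₀^3)*ψ' r)^2 / (18*r^2) := by
        simp only [hP', hh, hf]
        field_simp
        ring
      rw [hid]
      positivity
    have hmono : ∫ r in r₀..R, (1/2) * f r ≤ ∫ r in r₀..R, (P' r + (2/9) * h r) := by
      apply intervalIntegral.integral_mono_on hR (hfi.const_mul _) (hP'i.add (hhi.const_mul _))
      exact hptwise
    rw [intervalIntegral.integral_const_mul, intervalIntegral.integral_add hP'i
      (hhi.const_mul _), intervalIntegral.integral_const_mul, hFTC] at hmono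
    have hPr₀ : P r₀ = 0 := by simp [hP]
    have hPR : P R ≤ (1/3) * (R^3 * (ψ R)^2) := by
      simp only [hP]
      have : (0:ℝ) ≤ (ψ R)^2 := sq_nonneg _
      nlinarith [pow_pos hr₀ 3, sq_nonneg (ψ R)]
    have hIoc : ∫ r in r₀..R, h r ≤ B := by
      rw [intervalIntegral.integral_of_le hR]
      apply setIntegral_mono_set hB'
      · filter_upwards [ae_restrict_mem measurableSet_Ioi] with x hx
        have hx0 : (0:ℝ) < x := lt_trans hr₀ hx
        simp only [hh]
        positivity
      · exact HasSubset.Subset.eventuallyLE Ioc_subset_Ioi_self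
    linarith
  -- limit of boundary term
  have hbt : Tendsto (fun R : ℝ => R^3 * (ψ R)^2) atTop (nhds 0) := by
    have h1 : Tendsto (fun R : ℝ => (R ^ ((3:ℝ)/2) * ψ R) * (R ^ ((3:ℝ)/2) * ψ R))
        atTop (nhds 0) := by simpa using hdecay.mul hdecay
    apply h1.congr'
    filter_upwards [eventually_gt_atTop (0:ℝ)] with R hR
    have : (R ^ ((3:ℝ)/2)) * (R ^ ((3:ℝ)/2)) = R ^ (3:ℕ) := by
      rw [← Real.rpow_add hR, ← Real.rpow_natCast R 3]
      norm_num
    calc (R ^ ((3:ℝ)/2) * ψ R) * (R ^ ((3:ℝ)/2) * ψ R)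
        = (R ^ ((3:ℝ)/2)) * (R ^ ((3:ℝ)/2)) * (ψ R)^2 := by ring
      _ = R^3 * (ψ R)^2 := by rw [this]
  -- integrability on Ioi
  have hfIoc : ∀ R : ℝ, IntegrableOn f (Set.Ioc r₀ R) := by
    intro R
    rcases le_or_gt r₀ R with hR | hR
    · exact ((hfc.mono Icc_subset_Ici_self).integrableOn_Icc (a := r₀) (b := R)
        |>.mono_set Ioc_subset_Icc_self)
    · simp [Set.Ioc_eq_empty (not_lt.mpr hR.le)]
  have hAint : IntegrableOn f (Set.Ioi r₀) := by
    apply integrableOn_Ioi_of_intervalIntegral_norm_bounded ((4/9)*B + 1) r₀ hfIoc tendsto_id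
    have hev : ∀ᶠ R : ℝ in atTop, (2/3) * (R^3 * (ψ R)^2) ≤ 1 := by
      have := (hbt.const_mul (2/3 : ℝ))
      simp only [mul_zero] at this
      filter_upwards [this.eventually_le_const (by norm_num : (0:ℝ) < 1)] with R hR
      exact hR
    filter_upwards [hev, eventually_ge_atTop r₀] with R h1 h2
    have hnorm : ∀ r ∈ Set.Ioc r₀ R, ‖f r‖ = f r := by
      intro r hr
      have : (0:ℝ) ≤ f r := by simp only [hf]; positivity
      exact Real.norm_of_nonneg this
    have : ∫ r in r₀..R, ‖f r‖ = ∫ r in r₀..R, f r := by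
      rw [intervalIntegral.integral_of_le h2, intervalIntegral.integral_of_le h2]
      apply setIntegral_congr_fun measurableSet_Ioc hnorm
    rw [this]
    linarith [KEY R h2]
  constructor
  · rw [integrableOn_Ici_iff_integrableOn_Ioi]
    exact hAint
  · rw [integral_Ici_eq_integral_Ioi, integral_Ici_eq_integral_Ioi]
    have htend := intervalIntegral_tendsto_integral_Ioi r₀ hAint tendsto_id
    have hrhs : Tendsto (fun R : ℝ => (2/3) * (R^3 * (ψ R)^2) + (4/9) * B) atTop
        (nhds ((4/9) * B)) := by
      have := (hbt.const_mul (2/3 : ℝ)).add_const ((4/9) * B)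
      simpa using this
    apply le_of_tendsto_of_tendsto htend hrhs
    filter_upwards [eventually_ge_atTop r₀] with R hR
    exact KEY R hR

set_option maxHeartbeats 1000000 in
theorem no_stationary_solutions
    (M l r₀ a : ℝ) (hM : 0 < M) (hl : 0 < l) (hr₀ : 0 < r₀)
    (F : ℝ → ℝ) (hF : ∀ r, F r = 1 - 2 * M / r + r ^ 2 / l ^ 2)
    (hroot : F r₀ = 0)
    (huniq : ∀ r : ℝ, 0 < r → F r = 0 → r = r₀)
    (ha : -9/8 < a) (ha' : a ≤ 0)
    (ψ ψ' : ℝ → ℝ)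
    (hderiv : ∀ r ∈ Set.Ici r₀, HasDerivAt ψ (ψ' r) r)
    (hcont : ContinuousOn ψ' (Set.Ici r₀))
    (hdecay : Tendsto (fun r : ℝ => r ^ ((3:ℝ)/2) * ψ r) atTop (nhds 0))
    (hint : IntegrableOn (fun r : ℝ => r ^ 4 * (ψ' r) ^ 2) (Set.Ici r₀))
    (henergy : ∫ r in Set.Ici r₀,
        r ^ 2 * (F r * (ψ' r) ^ 2 + (2 * a / l ^ 2) * (ψ r) ^ 2) ≤ 0) :
    ∀ r ∈ Set.Ici r₀, ψ r = 0 := by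
  have hl2 : (0:ℝ) < l^2 := by positivity
  have hψc : ContinuousOn ψ (Set.Ici r₀) := fun x hx =>
    (hderiv x hx).continuousAt.continuousWithinAt
  -- mass of the black hole in terms of r₀
  have h2M : 2*M*l^2 = r₀*l^2 + r₀^3 := by
    have h0 := (hF r₀).symm.trans hroot
    field_simp at h0
    linarith
  -- factorization of F
  have hFeq : ∀ r : ℝ, 0 < r →
      F r = (r - r₀) * (l^2 + r^2 + r*r₀ + r₀^2) / (l^2 * r) := by
    intro r hr
    rw [hF r]
    field_simp
    linear_combination (-1) * h2M
  have hFpos : ∀ r ∈ Set.Ici r₀, 0 ≤ F r := by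
    intro r hr
    have hr0 : (0:ℝ) < r := lt_of_lt_of_le hr₀ hr
    rw [hFeq r hr0]
    have h1 : (0:ℝ) ≤ r - r₀ := sub_nonneg.mpr hr
    have h2 : (0:ℝ) < l^2 + r^2 + r*r₀ + r₀^2 := by positivity
    positivity
  have hFpos' : ∀ r ∈ Set.Ioi r₀, 0 < F r := by
    intro r hr
    have hr0 : (0:ℝ) < r := lt_trans hr₀ hr
    rw [hFeq r hr0]
    have h1 : (0:ℝ) < r - r₀ := sub_pos.mpr hr
    have h2 : (0:ℝ) < l^2 + r^2 + r*r₀ + r₀^2 := by positivity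
    positivity
  -- key pointwise inequality
  have keyptw : ∀ r ∈ Set.Ici r₀, (r^3 - r₀^3)^2 / r^2 ≤ l^2 * (r^2 * F r) := by
    intro r hr
    have hr0 : (0:ℝ) < r := lt_of_lt_of_le hr₀ hr
    have hFr : l^2 * (r^2 * F r) = r * ((r - r₀) * (l^2 + r^2 + r*r₀ + r₀^2)) := by
      rw [hFeq r hr0]
      field_simp
    rw [hFr, div_le_iff₀ (by positivity : (0:ℝ) < r^2)]
    have h1 : (0:ℝ) ≤ r - r₀ := sub_nonneg.mpr hr
    have hcube : r^3 - r₀^3 ≤ r^3 := by nlinarith [pow_pos hr₀ 3]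
    have hq : (0:ℝ) < r^2 + r*r₀ + r₀^2 := by positivity
    have hrr : r₀ ≤ r := hr
    have hcube0 : (0:ℝ) ≤ r^3 - r₀^3 := by nlinarith [pow_le_pow_left₀ hr₀.le hrr 3]
    nlinarith [mul_nonneg h1 hq.le, mul_nonneg (mul_nonneg h1 hq.le) hcube0,
      mul_nonneg (mul_nonneg h1 hq.le) (pow_pos hr0 3).le, sq_nonneg l,
      mul_nonneg (mul_nonneg h1 (pow_pos hr0 3).le) hl2.le]
  -- integrability of the Hardy weight
  set h : ℝ → ℝ := fun r => (r^3 - r₀^3)^2 / r^2 * (ψ' r)^2 with hh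
  have hhc : ContinuousOn h (Set.Ici r₀) := by
    apply ContinuousOn.mul _ (hcont.pow 2)
    apply ContinuousOn.div
    · exact (((continuousOn_pow 3).sub continuousOn_const).pow 2)
    · exact continuousOn_pow 2
    · intro x hx
      have : (0:ℝ) < x := lt_of_lt_of_le hr₀ hx
      positivity
  have hB : IntegrableOn h (Set.Ici r₀) := by
    apply hint.mono' (hhc.aestronglyMeasurable measurableSet_Ici)
    filter_upwards [ae_restrict_mem measurableSet_Ici] with r hr
    have hr0 : (0:ℝ) < r := lt_of_lt_of_le hr₀ hr
    have hrr : r₀ ≤ r := hr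
    have h1 : (0:ℝ) ≤ r^3 - r₀^3 := by nlinarith [pow_le_pow_left₀ hr₀.le hrr 3]
    have h2 : (r^3 - r₀^3)^2 / r^2 ≤ r^4 := by
      rw [div_le_iff₀ (by positivity : (0:ℝ) < r^2)]
      nlinarith [pow_pos hr₀ 3]
    have hnn : (0:ℝ) ≤ h r := by simp only [hh]; positivity
    rw [Real.norm_of_nonneg hnn]
    simp only [hh]
    nlinarith [sq_nonneg (ψ' r)]
  -- Hardy inequality
  obtain ⟨hAint, hAle⟩ := hardy_aux r₀ hr₀ ψ ψ' hderiv hcont hdecay hB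
  -- continuity and integrability of the F-term
  have hFcont : ContinuousOn F (Set.Ici r₀) := by
    have hc : ContinuousOn (fun r : ℝ => 1 - 2*M/r + r^2/l^2) (Set.Ici r₀) := by
      apply ContinuousOn.add
      · apply ContinuousOn.sub continuousOn_const
        exact ContinuousOn.div continuousOn_const continuousOn_id
          (fun x hx => (lt_of_lt_of_le hr₀ hx).ne')
      · exact (continuousOn_pow 2).div_const _
    exact hc.congr (fun r _ => hF r)
  have hFψint : IntegrableOn (fun r => r^2 * F r * (ψ' r)^2) (Set.Ici r₀) := by
    have hbound : IntegrableOn (fun r => (1/r₀^2 + 1/l^2) * (r^4 * (ψ' r)^2)) (Set.Ici r₀) :=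
      hint.const_mul _
    apply hbound.mono'
    · exact (((continuousOn_pow 2).mul hFcont).mul (hcont.pow 2)).aestronglyMeasurable
        measurableSet_Ici
    · filter_upwards [ae_restrict_mem measurableSet_Ici] with r hr
      have hr0 : (0:ℝ) < r := lt_of_lt_of_le hr₀ hr
      have hFnn := hFpos r hr
      have hnn : (0:ℝ) ≤ r^2 * F r * (ψ' r)^2 := by positivity
      rw [Real.norm_of_nonneg hnn]
      have hFub : F r ≤ 1 + r^2/l^2 := by
        rw [hF r]
        have : 0 < 2*M/r := by positivity
        linarith
      have hrr : r₀ ≤ r := hr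
      have hr2 : r^2 ≤ r^4/r₀^2 := by
        rw [le_div_iff₀ (by positivity : (0:ℝ) < r₀^2)]
        nlinarith [mul_le_mul_of_nonneg_left (pow_le_pow_left₀ hr₀.le hrr 2) (sq_nonneg r)]
      have h1 : r^2 * F r ≤ (1/r₀^2 + 1/l^2) * r^4 := by
        have h2 : r^2 * F r ≤ r^2 * (1 + r^2/l^2) :=
          mul_le_mul_of_nonneg_left hFub (by positivity)
        have h3 : r^2 * (1 + r^2/l^2) = r^2 + r^4/l^2 := by ring
        have h4 : r^2 + r^4/l^2 ≤ r^4/r₀^2 + r^4/l^2 := by linarith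
        calc r^2 * F r ≤ r^2 + r^4/l^2 := by linarith
          _ ≤ r^4/r₀^2 + r^4/l^2 := h4
          _ = (1/r₀^2 + 1/l^2) * r^4 := by ring
      calc r^2 * F r * (ψ' r)^2 ≤ ((1/r₀^2 + 1/l^2) * r^4) * (ψ' r)^2 :=
            mul_le_mul_of_nonneg_right h1 (sq_nonneg _)
        _ = (1/r₀^2 + 1/l^2) * (r^4 * (ψ' r)^2) := by ring
  -- split the energy integral
  have hsplit : ∫ r in Set.Ici r₀, r ^ 2 * (F r * (ψ' r) ^ 2 + (2 * a / l ^ 2) * (ψ r) ^ 2)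
      = (∫ r in Set.Ici r₀, r^2 * F r * (ψ' r)^2)
        + (2*a/l^2) * ∫ r in Set.Ici r₀, r^2 * (ψ r)^2 := by
    rw [← integral_const_mul, ← integral_add hFψint (hAint.const_mul _)]
    apply setIntegral_congr_fun measurableSet_Ici
    intro r _
    ring
  rw [hsplit] at henergy
  set I1 : ℝ := ∫ r in Set.Ici r₀, r^2 * F r * (ψ' r)^2 with hI1
  set A : ℝ := ∫ r in Set.Ici r₀, r^2 * (ψ r)^2 with hA
  set B : ℝ := ∫ r in Set.Ici r₀, h r with hBdef
  have hc : 2*a/l^2 ≤ 0 := div_nonpos_of_nonpos_of_nonneg (by linarith) hl2.le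
  have h1 : (2*a/l^2) * ((4/9)*B) ≤ (2*a/l^2) * A := mul_le_mul_of_nonpos_left hAle hc
  -- compare B-integral with I1
  have h2 : (8*a/9) * I1 ≤ (2*a/l^2) * ((4/9)*B) := by
    have hmono : ∫ r in Set.Ici r₀, (8*a/9) * (r^2 * F r * (ψ' r)^2)
        ≤ ∫ r in Set.Ici r₀, (8*a/(9*l^2)) * h r := by
      apply setIntegral_mono_on (hFψint.const_mul _) (hB.const_mul _) measurableSet_Ici
      intro r hr
      have hkey := keyptw r hr
      have t1 : h r ≤ l^2 * (r^2 * F r) * (ψ' r)^2 :=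
        mul_le_mul_of_nonneg_right hkey (sq_nonneg _)
      have hcoef : 8*a/(9*l^2) ≤ 0 :=
        div_nonpos_of_nonpos_of_nonneg (by linarith) (by positivity)
      have t2 : (8*a/(9*l^2)) * (l^2 * (r^2 * F r) * (ψ' r)^2) ≤ (8*a/(9*l^2)) * h r :=
        mul_le_mul_of_nonpos_left t1 hcoef
      have t3 : (8*a/(9*l^2)) * (l^2 * (r^2 * F r) * (ψ' r)^2)
          = (8*a/9) * (r^2 * F r * (ψ' r)^2) := by
        field_simp
      linarith
    rw [integral_const_mul, integral_const_mul] at hmono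
    have : (2*a/l^2) * ((4/9)*B) = (8*a/(9*l^2)) * B := by ring
    rw [this]
    exact hmono
  have hI1nonneg : 0 ≤ I1 := by
    apply setIntegral_nonneg measurableSet_Ici
    intro r hr
    have := hFpos r hr
    positivity
  have hkey : I1 + (8*a/9) * I1 ≤ 0 := by linarith
  have hI1zero : I1 = 0 := by
    nlinarith [hkey, hI1nonneg, mul_nonneg (show (0:ℝ) ≤ 1 + 8*a/9 by linarith) hI1nonneg]
  -- integrand vanishes a.e.
  have hae : (fun r => r^2 * F r * (ψ' r)^2) =ᵐ[volume.restrict (Set.Ici r₀)] 0 := by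
    have hnn : 0 ≤ᵐ[volume.restrict (Set.Ici r₀)] (fun r => r^2 * F r * (ψ' r)^2) := by
      filter_upwards [ae_restrict_mem measurableSet_Ici] with r hr
      have := hFpos r hr
      positivity
    exact (integral_eq_zero_iff_of_nonneg_ae hnn hFψint).mp hI1zero
  -- ψ' vanishes on Ioi r₀
  have hψ'Ioi : ∀ x ∈ Set.Ioi r₀, ψ' x = 0 := by
    intro x hx
    by_contra hne
    have hcx : ContinuousAt ψ' x := hcont.continuousAt (Ici_mem_nhds hx)
    have h1' : ∀ᶠ y in nhds x, ψ' y ≠ 0 := hcx.eventually_ne hne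
    have h2' : ∀ᶠ y in nhds x, y ∈ Set.Ioi r₀ := Ioi_mem_nhds hx
    obtain ⟨U, hUsub, hUopen, hxU⟩ := mem_nhds_iff.mp (h1'.and h2')
    have hU0 : (0:ENNReal) < volume U := hUopen.measure_pos volume ⟨x, hxU⟩
    rw [EventuallyEq, ae_restrict_iff' measurableSet_Ici, ae_iff] at hae
    have hsub : U ⊆ {y : ℝ | ¬ (y ∈ Set.Ici r₀ →
        (fun r => r^2 * F r * (ψ' r)^2) y = (0 : ℝ → ℝ) y)} := by
      intro y hy
      obtain ⟨hy1, hy2⟩ := hUsub hy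
      intro hcontra
      have hy3 : y ∈ Set.Ici r₀ := Set.mem_Ici.mpr (le_of_lt hy2)
      have heq := hcontra hy3
      simp only [Pi.zero_apply] at heq
      have hy0 : (0:ℝ) < y := lt_trans hr₀ hy2
      have hFy : 0 < F y := hFpos' y hy2
      have hsq : (0:ℝ) < (ψ' y)^2 :=
        lt_of_le_of_ne (sq_nonneg _) (Ne.symm (pow_ne_zero 2 hy1))
      have : (0:ℝ) < y^2 * F y * (ψ' y)^2 := by positivity
      linarith [this, le_of_eq heq]
    exact absurd (measure_mono_null hsub hae) hU0.ne'
  -- ψ' vanishes at r₀ by continuity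
  have hψ'r₀ : ψ' r₀ = 0 := by
    have hcw : Tendsto ψ' (nhdsWithin r₀ (Set.Ioi r₀)) (nhds (ψ' r₀)) :=
      ((hcont r₀ self_mem_Ici).tendsto).mono_left (nhdsWithin_mono r₀ Ioi_subset_Ici_self)
    have hz : Tendsto ψ' (nhdsWithin r₀ (Set.Ioi r₀)) (nhds 0) := by
      apply Tendsto.congr' _ tendsto_const_nhds
      filter_upwards [self_mem_nhdsWithin] with y hy
      exact (hψ'Ioi y hy).symm
    exact tendsto_nhds_unique hcw hz
  have hψ'all : ∀ x ∈ Set.Ici r₀, ψ' x = 0 := by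
    intro x hx
    rcases eq_or_lt_of_le (Set.mem_Ici.mp hx) with heq | hlt
    · rw [← heq]; exact hψ'r₀
    · exact hψ'Ioi x hlt
  -- ψ is constant on Ici r₀
  have hconst : ∀ R ∈ Set.Ici r₀, ψ R = ψ r₀ := by
    intro R hR
    have hc1 : ContinuousOn ψ (Set.Icc r₀ R) := hψc.mono Icc_subset_Ici_self
    have hd1 : ∀ x ∈ Set.Ico r₀ R, HasDerivWithinAt ψ 0 (Set.Ici x) x := by
      intro x hx
      have h := (hderiv x hx.1).hasDerivWithinAt (s := Set.Ici x)
      rwa [hψ'all x hx.1] at h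
    exact constant_of_has_deriv_right_zero hc1 hd1 R (right_mem_Icc.mpr hR)
  -- ψ r₀ = 0 from decay
  have hψr₀ : ψ r₀ = 0 := by
    have htend0 : Tendsto ψ atTop (nhds 0) := by
      have h1' : Tendsto (fun R : ℝ => R ^ (-(3:ℝ)/2) * (R ^ ((3:ℝ)/2) * ψ R))
          atTop (nhds 0) := by
        have := (tendsto_rpow_neg_atTop (by norm_num : (0:ℝ) < 3/2)).mul hdecay
        simp only [mul_zero] at this
        convert this using 2 with R
        norm_num
      apply h1'.congr'
      filter_upwards [eventually_gt_atTop (0:ℝ)] with R hR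
      rw [← mul_assoc, ← Real.rpow_add hR]
      norm_num
    have htendc : Tendsto ψ atTop (nhds (ψ r₀)) := by
      apply Tendsto.congr' _ tendsto_const_nhds
      filter_upwards [eventually_ge_atTop r₀] with R hR
      exact (hconst R hR).symm
    exact tendsto_nhds_unique htendc htend0
  intro r hr
  rw [hconst r hr, hψr₀]
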